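/- Let h̃, h : ℝ^d × [0,T) → (0,∞) be defined by h(x,t) = ∫_{S_T} q(t,x;T,y)ν_T(y)dy and h̃(x,t) = ∫_{S_T} q(t,x;T,y)ν̃_T(y)dy with ν_min ≤ ν_T, ν̃_T ≤ ν_max on S_T. If sup_{y∈S_T}‖∇_x log q(t,x;T,y)‖ ≤ C(‖x‖+R)/(T−t) for S_T ⊆ B_R(0), then ‖∇_x log h̃(x,t) − ∇_x log h(x,t)‖ ≤ (‖ν̃_T − ν_T‖_{∞,S_T}/ν_min) · (sup_{y∈S_T}‖∇_x log q(t,x;T,y)‖ + ‖∇_x log h(x,t)‖) ≤ 2C·(‖ν̃_T − ν_T‖_{∞,S_T}/ν_min)·(‖x‖+R)/(T−t). -/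

import Mathlib

set_option synthInstance.maxHeartbeats 1000000
set_option maxHeartbeats 2000000
open MeasureTheory InnerProductSpace Metric

lemma aux_log_grad {n : ℕ} {f : EuclideanSpace ℝ (Fin n) → ℝ} {A x : EuclideanSpace ℝ (Fin n)}
    (hf : HasGradientAt f A x) (hfx : f x ≠ 0) :
    gradient (fun x' => Real.log (f x')) x = (f x)⁻¹ • A := by
  have h := (hf.hasFDerivAt.log hfx)
  have h2 : ((f x)⁻¹ • (toDual ℝ (EuclideanSpace ℝ (Fin n))) A)
      = (toDual ℝ (EuclideanSpace ℝ (Fin n))) ((f x)⁻¹ • A) := (map_smul _ _ _).symm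
  rw [h2] at h
  simpa using h.hasGradientAt.gradient

lemma aux_grad {n : ℕ}
    (q : EuclideanSpace ℝ (Fin n) → EuclideanSpace ℝ (Fin n) → ℝ)
    (hqc : Continuous fun p : EuclideanSpace ℝ (Fin n) × EuclideanSpace ℝ (Fin n) => q p.1 p.2)
    (hqc1 : ∀ y, ContDiff ℝ 1 fun x => q x y)
    (hgradc : Continuous fun p : EuclideanSpace ℝ (Fin n) × EuclideanSpace ℝ (Fin n) =>
      gradient (fun x => q x p.2) p.1)
    (ST : Set (EuclideanSpace ℝ (Fin n))) (hSTc : IsCompact ST) (hSTm : MeasurableSet ST)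
    (ν : EuclideanSpace ℝ (Fin n) → ℝ) (hνm : Measurable ν)
    (νmax : ℝ) (hb : ∀ y, |ν y| ≤ νmax)
    (x : EuclideanSpace ℝ (Fin n)) :
    HasGradientAt (fun x' => ∫ y in ST, q x' y * ν y)
      (∫ y in ST, ν y • gradient (fun x' => q x' y) x) x := by
  set D := toDual ℝ (EuclideanSpace ℝ (Fin n)) with hD
  have hμfin : volume ST ≠ ⊤ := hSTc.measure_lt_top.ne
  set g : EuclideanSpace ℝ (Fin n) → EuclideanSpace ℝ (Fin n) → EuclideanSpace ℝ (Fin n) :=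
    fun x' y => gradient (fun x'' => q x'' y) x' with hgdef
  have hK : IsCompact ((closedBall x 1) ×ˢ ST) := (isCompact_closedBall x 1).prod hSTc
  obtain ⟨M, hM⟩ := hK.exists_bound_of_continuousOn hgradc.continuousOn
  obtain ⟨Mq, hMq⟩ := hK.exists_bound_of_continuousOn hqc.continuousOn
  have hqmeas : ∀ x', AEStronglyMeasurable (fun y => q x' y * ν y) volume := by
    intro x'
    exact ((hqc.comp (Continuous.prodMk_right x')).measurable.mul hνm).aestronglyMeasurable
  have hint : ∀ x' ∈ closedBall x 1, IntegrableOn (fun y => q x' y * ν y) ST := by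
    intro x' hx'
    apply Measure.integrableOn_of_bounded hμfin (hqmeas x') (M := Mq * νmax)
    rw [ae_restrict_iff' hSTm]
    refine Filter.Eventually.of_forall fun y hy => ?_
    have h1 := hMq (x', y) ⟨hx', hy⟩
    have h2 := hb y
    rw [Real.norm_eq_abs, abs_mul]
    exact mul_le_mul h1 h2 (abs_nonneg _) ((norm_nonneg _).trans h1)
  have hF'meas : AEStronglyMeasurable (fun y => ν y • D (g x y)) volume := by
    apply AEStronglyMeasurable.smul hνm.aestronglyMeasurable
    exact (D.continuous.comp (hgradc.comp (Continuous.prodMk_right x))).aestronglyMeasurable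
  have key : HasFDerivAt (fun x' => ∫ y in ST, q x' y * ν y)
      (∫ y in ST, ν y • D (g x y)) x := by
    apply hasFDerivAt_integral_of_dominated_of_fderiv_le
      (F' := fun x' y => ν y • D (g x' y)) (bound := fun _ => νmax * M) (ball_mem_nhds x zero_lt_one)
    · exact Filter.Eventually.of_forall fun x' => (hqmeas x').restrict
    · exact hint x (mem_closedBall_self zero_le_one)
    · exact hF'meas.restrict
    · rw [ae_restrict_iff' hSTm]
      refine Filter.Eventually.of_forall fun y hy x' hx' => ?_
      rw [norm_smul (ν y) (D (g x' y)), D.norm_map]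
      exact mul_le_mul (hb y) (hM (x', y) ⟨ball_subset_closedBall hx', hy⟩)
        (norm_nonneg _) ((abs_nonneg _).trans (hb y))
    · exact integrableOn_const hμfin
    · rw [ae_restrict_iff' hSTm]
      refine Filter.Eventually.of_forall fun y hy x' hx' => ?_
      have hd : HasGradientAt (fun x'' => q x'' y) (g x' y) x' :=
        (((hqc1 y).differentiable one_ne_zero) x').hasGradientAt
      exact hd.hasFDerivAt.mul_const (ν y)
  have hIg : IntegrableOn (fun y => ν y • g x y) ST := by
    apply Measure.integrableOn_of_bounded hμfin
      (hνm.aestronglyMeasurable.smul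
        ((hgradc.comp (Continuous.prodMk_right x)).aestronglyMeasurable)) (M := νmax * M)
    rw [ae_restrict_iff' hSTm]
    refine Filter.Eventually.of_forall fun y hy => ?_
    show ‖ν y • gradient (fun x' => q x' y) x‖ ≤ νmax * M
    rw [norm_smul]
    exact mul_le_mul (hb y) (hM (x, y) ⟨mem_closedBall_self zero_le_one, hy⟩)
      (norm_nonneg _) ((abs_nonneg _).trans (hb y))
  have hIgD : Integrable (fun y => ν y • D (g x y)) (volume.restrict ST) := by
    apply Measure.integrableOn_of_bounded hμfin hF'meas (M := νmax * M)
    rw [ae_restrict_iff' hSTm]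
    refine Filter.Eventually.of_forall fun y hy => ?_
    rw [norm_smul (ν y) (D (g x y)), D.norm_map]
    exact mul_le_mul (hb y) (hM (x, y) ⟨mem_closedBall_self zero_le_one, hy⟩)
      (norm_nonneg _) ((abs_nonneg _).trans (hb y))
  have heq : (∫ y in ST, ν y • D (g x y)) = D (∫ y in ST, ν y • g x y) := by
    apply ContinuousLinearMap.ext
    intro v
    rw [ContinuousLinearMap.integral_apply hIgD]
    have h3 := integral_inner (𝕜 := ℝ) hIg v
    have h4 : ∀ y, (ν y • D (g x y)) v = inner ℝ v (ν y • g x y) := by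
      intro y
      rw [ContinuousLinearMap.smul_apply]
      rw [hD, InnerProductSpace.toDual_apply_apply]
      rw [real_inner_smul_right, real_inner_comm]
      rfl
    calc (∫ y in ST, (ν y • D (g x y)) v)
        = ∫ y in ST, inner ℝ v (ν y • g x y) := by simp_rw [h4]
      _ = inner ℝ v (∫ y in ST, ν y • g x y) := h3
      _ = (D (∫ y in ST, ν y • g x y)) v := by
          rw [hD, InnerProductSpace.toDual_apply_apply, real_inner_comm]
  rw [heq] at key
  simpa [hD, hgdef] using key.hasGradientAt

lemma aux_intOn {n : ℕ} {G : Type*} [NormedAddCommGroup G]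
    {f : EuclideanSpace ℝ (Fin n) → G} {ST : Set (EuclideanSpace ℝ (Fin n))}
    (hSTc : IsCompact ST)
    (hf : AEStronglyMeasurable f volume) {M : ℝ}
    (hbd : ∀ y ∈ ST, ‖f y‖ ≤ M) : IntegrableOn f ST := by
  apply Measure.integrableOn_of_bounded hSTc.measure_lt_top.ne hf
  rw [ae_restrict_iff' hSTc.measurableSet]
  exact Filter.Eventually.of_forall hbd

/-- Perturbation of `h`-transform gradients: with
`h(x) = ∫_{S_T} q(t,x;T,y) ν_T(y) dy` and `h̃(x) = ∫_{S_T} q(t,x;T,y) ν̃_T(y) dy`,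
`ν_min ≤ ν_T, ν̃_T ≤ ν_max` on `S_T ⊆ B_R(0)`, and
`sup_{y∈S_T} ‖∇_x log q(t,x;T,y)‖ ≤ C(‖x‖+R)/(T−t)`, one has
`‖∇ log h̃ − ∇ log h‖ ≤ (‖ν̃_T−ν_T‖_{∞,S_T}/ν_min)(sup_y ‖∇ log q‖ + ‖∇ log h‖)
  ≤ 2C (‖ν̃_T−ν_T‖_{∞,S_T}/ν_min)(‖x‖+R)/(T−t)`. -/
theorem stmt17 {n : ℕ} (T t R C : ℝ) (htT : t < T) (hR : 0 < R) (hC : 0 ≤ C)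
    (q : EuclideanSpace ℝ (Fin n) → EuclideanSpace ℝ (Fin n) → ℝ)
    (hqc : Continuous fun p : EuclideanSpace ℝ (Fin n) × EuclideanSpace ℝ (Fin n) => q p.1 p.2)
    (hqpos : ∀ x y, 0 < q x y)
    (hqc1 : ∀ y, ContDiff ℝ 1 fun x => q x y)
    (hgradc : Continuous fun p : EuclideanSpace ℝ (Fin n) × EuclideanSpace ℝ (Fin n) =>
      gradient (fun x => q x p.2) p.1)
    (ST : Set (EuclideanSpace ℝ (Fin n))) (hSTc : IsCompact ST)
    (hSTm : MeasurableSet ST) (hvol : 0 < volume ST)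
    (hSTR : ST ⊆ Metric.closedBall 0 R)
    (νT ν'T : EuclideanSpace ℝ (Fin n) → ℝ)
    (hνm : Measurable νT) (hν'm : Measurable ν'T)
    (νmin νmax : ℝ) (hνmin : 0 < νmin)
    (hνb : ∀ y ∈ ST, νmin ≤ νT y ∧ νT y ≤ νmax)
    (hν'b : ∀ y ∈ ST, νmin ≤ ν'T y ∧ ν'T y ≤ νmax)
    (hνsupp : ∀ y ∉ ST, νT y = 0) (hν'supp : ∀ y ∉ ST, ν'T y = 0)
    (hgrad : ∀ x, ∀ y ∈ ST,
      ‖gradient (fun x' => Real.log (q x' y)) x‖ ≤ C * (‖x‖ + R) / (T - t)) :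
    ∀ x,
      ‖gradient (fun x' => Real.log (∫ y in ST, q x' y * ν'T y)) x
          - gradient (fun x' => Real.log (∫ y in ST, q x' y * νT y)) x‖
        ≤ sSup ((fun y => |ν'T y - νT y|) '' ST) / νmin *
            (sSup ((fun y => ‖gradient (fun x' => Real.log (q x' y)) x‖) '' ST)
              + ‖gradient (fun x' => Real.log (∫ y in ST, q x' y * νT y)) x‖)
      ∧
      ‖gradient (fun x' => Real.log (∫ y in ST, q x' y * ν'T y)) x
          - gradient (fun x' => Real.log (∫ y in ST, q x' y * νT y)) x‖
        ≤ 2 * C * (sSup ((fun y => |ν'T y - νT y|) '' ST) / νmin)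
            * (‖x‖ + R) / (T - t) := by
  intro x
  have hT : 0 < T - t := sub_pos.2 htT
  have hμfin : volume ST ≠ ⊤ := hSTc.measure_lt_top.ne
  have hne : ST.Nonempty := nonempty_of_measure_ne_zero hvol.ne'
  obtain ⟨y₀, hy₀⟩ := hne
  have hne' : ST.Nonempty := ⟨y₀, hy₀⟩
  have hmm : νmin ≤ νmax := le_trans (hνb y₀ hy₀).1 (hνb y₀ hy₀).2
  have hbν : ∀ y, |νT y| ≤ νmax := by
    intro y
    by_cases hy : y ∈ ST
    · rw [abs_of_nonneg (hνmin.le.trans (hνb y hy).1)]; exact (hνb y hy).2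
    · rw [hνsupp y hy, abs_zero]; exact (hνmin.trans_le hmm).le
  have hbν' : ∀ y, |ν'T y| ≤ νmax := by
    intro y
    by_cases hy : y ∈ ST
    · rw [abs_of_nonneg (hνmin.le.trans (hν'b y hy).1)]; exact (hν'b y hy).2
    · rw [hν'supp y hy, abs_zero]; exact (hνmin.trans_le hmm).le
  -- abbreviations
  set g : EuclideanSpace ℝ (Fin n) → EuclideanSpace ℝ (Fin n) :=
    fun y => gradient (fun x' => q x' y) x with hgdef
  set lg : EuclideanSpace ℝ (Fin n) → EuclideanSpace ℝ (Fin n) :=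
    fun y => gradient (fun x' => Real.log (q x' y)) x with hlgdef
  set Q := sSup ((fun y => ‖lg y‖) '' ST) with hQdef
  set Δ := sSup ((fun y => |ν'T y - νT y|) '' ST) with hΔdef
  set Cb := C * (‖x‖ + R) / (T - t) with hCbdef
  set I := ∫ y in ST, q x y with hIdef
  set H := ∫ y in ST, q x y * νT y with hHdef
  set H' := ∫ y in ST, q x y * ν'T y with hH'def
  set A := ∫ y in ST, νT y • g y with hAdef
  set A' := ∫ y in ST, ν'T y • g y with hA'def
  have hgc : Continuous g := hgradc.comp (Continuous.prodMk_right x)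
  obtain ⟨Mg, hMg⟩ := hSTc.exists_bound_of_continuousOn hgc.continuousOn
  have hqxc : Continuous fun y => q x y := hqc.comp (Continuous.prodMk_right x)
  obtain ⟨Mq, hMq⟩ := hSTc.exists_bound_of_continuousOn hqxc.continuousOn
  -- integrability
  have hIint : IntegrableOn (fun y => q x y) ST := hqxc.continuousOn.integrableOn_compact hSTc
  have hHint : IntegrableOn (fun y => q x y * νT y) ST :=
    aux_intOn hSTc ((hqxc.measurable.mul hνm).aestronglyMeasurable) (M := Mq * νmax)
      (fun y hy => by
        rw [Real.norm_eq_abs, abs_mul]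
        exact mul_le_mul (hMq y hy) (hbν y) (abs_nonneg _) ((norm_nonneg _).trans (hMq y hy)))
  have hH'int : IntegrableOn (fun y => q x y * ν'T y) ST :=
    aux_intOn hSTc ((hqxc.measurable.mul hν'm).aestronglyMeasurable) (M := Mq * νmax)
      (fun y hy => by
        rw [Real.norm_eq_abs, abs_mul]
        exact mul_le_mul (hMq y hy) (hbν' y) (abs_nonneg _) ((norm_nonneg _).trans (hMq y hy)))
  have hAint : IntegrableOn (fun y => νT y • g y) ST :=
    aux_intOn hSTc (hνm.aestronglyMeasurable.smul hgc.aestronglyMeasurable) (M := νmax * Mg)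
      (fun y hy => by
        rw [norm_smul, Real.norm_eq_abs]
        exact mul_le_mul (hbν y) (hMg y hy) (norm_nonneg _) ((abs_nonneg _).trans (hbν y)))
  have hA'int : IntegrableOn (fun y => ν'T y • g y) ST :=
    aux_intOn hSTc (hν'm.aestronglyMeasurable.smul hgc.aestronglyMeasurable) (M := νmax * Mg)
      (fun y hy => by
        rw [norm_smul, Real.norm_eq_abs]
        exact mul_le_mul (hbν' y) (hMg y hy) (norm_nonneg _) ((abs_nonneg _).trans (hbν' y)))
  -- positivity of I, H, H'
  have hIpos : 0 < I := by
    obtain ⟨z, hz, hzmin⟩ := hSTc.exists_isMinOn hne' hqxc.continuousOn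
    have h1 : 0 < volume.real ST := ENNReal.toReal_pos hvol.ne' hμfin
    have h2 := setIntegral_ge_of_const_le hSTm hμfin (fun y hy => hzmin hy) hIint
    exact lt_of_lt_of_le (smul_pos h1 (hqpos x z)) h2
  have hHge : νmin * I ≤ H := by
    have h1 : (∫ y in ST, q x y * νmin) ≤ H :=
      setIntegral_mono_on (hIint.mul_const νmin) hHint hSTm
        (fun y hy => mul_le_mul_of_nonneg_left (hνb y hy).1 (hqpos x y).le)
    calc νmin * I = ∫ y in ST, q x y * νmin := by rw [hIdef, integral_mul_const]; ring
      _ ≤ H := h1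
  have hH'ge : νmin * I ≤ H' := by
    have h1 : (∫ y in ST, q x y * νmin) ≤ H' :=
      setIntegral_mono_on (hIint.mul_const νmin) hH'int hSTm
        (fun y hy => mul_le_mul_of_nonneg_left (hν'b y hy).1 (hqpos x y).le)
    calc νmin * I = ∫ y in ST, q x y * νmin := by rw [hIdef, integral_mul_const]; ring
      _ ≤ H' := h1
  have hHpos : 0 < H := lt_of_lt_of_le (mul_pos hνmin hIpos) hHge
  have hH'pos : 0 < H' := lt_of_lt_of_le (mul_pos hνmin hIpos) hH'ge
  -- log-gradient of q
  have hlg : ∀ y, lg y = (q x y)⁻¹ • g y := fun y =>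
    aux_log_grad ((hqc1 y).differentiable one_ne_zero x).hasGradientAt (hqpos x y).ne'
  have hgnorm : ∀ y, ‖g y‖ = q x y * ‖lg y‖ := by
    intro y
    rw [hlg y, norm_smul, Real.norm_eq_abs, abs_inv, abs_of_pos (hqpos x y), ← mul_assoc,
      mul_inv_cancel₀ (hqpos x y).ne', one_mul]
  -- Q and Δ facts
  have hQbdd : BddAbove ((fun y => ‖lg y‖) '' ST) :=
    ⟨Cb, by rintro _ ⟨y, hy, rfl⟩; exact hgrad x y hy⟩
  have hQge : ∀ y ∈ ST, ‖lg y‖ ≤ Q := fun y hy => le_csSup hQbdd ⟨y, hy, rfl⟩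
  have hQle : Q ≤ Cb := csSup_le (hne'.image _) (by rintro _ ⟨y, hy, rfl⟩; exact hgrad x y hy)
  have hQ0 : 0 ≤ Q := (norm_nonneg _).trans (hQge y₀ hy₀)
  have hΔub : ∀ y ∈ ST, |ν'T y - νT y| ≤ νmax - νmin := fun y hy =>
    abs_sub_le_iff.2 ⟨by linarith [(hν'b y hy).2, (hνb y hy).1],
      by linarith [(hνb y hy).2, (hν'b y hy).1]⟩
  have hΔbdd : BddAbove ((fun y => |ν'T y - νT y|) '' ST) :=
    ⟨νmax - νmin, by rintro _ ⟨y, hy, rfl⟩; exact hΔub y hy⟩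
  have hΔge : ∀ y ∈ ST, |ν'T y - νT y| ≤ Δ := fun y hy => le_csSup hΔbdd ⟨y, hy, rfl⟩
  have hΔ0 : 0 ≤ Δ := (abs_nonneg _).trans (hΔge y₀ hy₀)
  have hgQ : ∀ y ∈ ST, ‖g y‖ ≤ q x y * Q := fun y hy => by
    rw [hgnorm y]
    exact mul_le_mul_of_nonneg_left (hQge y hy) (hqpos x y).le
  -- gradient formulas for log H, log H'
  have hGradH := aux_grad q hqc hqc1 hgradc ST hSTc hSTm νT hνm νmax hbν x
  have hGradH' := aux_grad q hqc hqc1 hgradc ST hSTc hSTm ν'T hν'm νmax hbν' x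
  have hlogH : gradient (fun x' => Real.log (∫ y in ST, q x' y * νT y)) x = H⁻¹ • A := by
    simpa using aux_log_grad hGradH hHpos.ne'
  have hlogH' : gradient (fun x' => Real.log (∫ y in ST, q x' y * ν'T y)) x = H'⁻¹ • A' := by
    simpa using aux_log_grad hGradH' hH'pos.ne'
  -- norm bounds
  have hAle : ‖A‖ ≤ Q * H := by
    calc ‖A‖ ≤ ∫ y in ST, ‖νT y • g y‖ := norm_integral_le_integral_norm _
      _ ≤ ∫ y in ST, q x y * νT y * Q := by
          apply setIntegral_mono_on hAint.norm (hHint.mul_const Q) hSTm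
          intro y hy
          rw [norm_smul, Real.norm_eq_abs, abs_of_nonneg (hνmin.le.trans (hνb y hy).1)]
          calc νT y * ‖g y‖ ≤ νT y * (q x y * Q) :=
                mul_le_mul_of_nonneg_left (hgQ y hy) (hνmin.le.trans (hνb y hy).1)
            _ = q x y * νT y * Q := by ring
      _ = Q * H := by rw [hHdef, integral_mul_const]; ring
  have hGnormEq : ‖H⁻¹ • A‖ = H⁻¹ * ‖A‖ := by
    rw [norm_smul, Real.norm_eq_abs, abs_inv, abs_of_pos hHpos]
  have hGle : ‖H⁻¹ • A‖ ≤ Q := by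
    rw [hGnormEq]
    calc H⁻¹ * ‖A‖ ≤ H⁻¹ * (Q * H) :=
          mul_le_mul_of_nonneg_left hAle (inv_nonneg.2 hHpos.le)
      _ = Q := by field_simp
  have hAA' : ‖A' - A‖ ≤ Δ * Q * I := by
    have hsubint : IntegrableOn (fun y => (ν'T y - νT y) • g y) ST :=
      aux_intOn hSTc ((hν'm.sub hνm).aestronglyMeasurable.smul hgc.aestronglyMeasurable)
        (M := (νmax - νmin) * Mg)
        (fun y hy => by
          rw [norm_smul, Real.norm_eq_abs]
          exact mul_le_mul (hΔub y hy) (hMg y hy) (norm_nonneg _)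
            (by linarith))
    have hsub : A' - A = ∫ y in ST, (ν'T y - νT y) • g y := by
      rw [hA'def, hAdef, ← integral_sub hA'int hAint]
      apply integral_congr_ae
      filter_upwards with y
      rw [sub_smul]
    calc ‖A' - A‖ = ‖∫ y in ST, (ν'T y - νT y) • g y‖ := by rw [hsub]
      _ ≤ ∫ y in ST, ‖(ν'T y - νT y) • g y‖ := norm_integral_le_integral_norm _
      _ ≤ ∫ y in ST, Δ * Q * q x y := by
          apply setIntegral_mono_on hsubint.norm (hIint.const_mul (Δ * Q)) hSTm
          intro y hy
          rw [norm_smul, Real.norm_eq_abs]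
          calc |ν'T y - νT y| * ‖g y‖ ≤ Δ * (q x y * Q) :=
                mul_le_mul (hΔge y hy) (hgQ y hy) (norm_nonneg _) hΔ0
            _ = Δ * Q * q x y := by ring
      _ = Δ * Q * I := by rw [hIdef, integral_const_mul]
  have hHH' : |H - H'| ≤ Δ * I := by
    have hsubint : IntegrableOn (fun y => q x y * (νT y - ν'T y)) ST :=
      aux_intOn hSTc ((hqxc.measurable.mul (hνm.sub hν'm)).aestronglyMeasurable)
        (M := Mq * (νmax - νmin))
        (fun y hy => by
          rw [Real.norm_eq_abs, abs_mul, abs_sub_comm]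
          exact mul_le_mul (hMq y hy) (hΔub y hy) (abs_nonneg _)
            ((norm_nonneg _).trans (hMq y hy)))
    have hsub : H - H' = ∫ y in ST, q x y * (νT y - ν'T y) := by
      rw [hHdef, hH'def, ← integral_sub hHint hH'int]
      apply integral_congr_ae
      filter_upwards with y
      ring
    calc |H - H'| = ‖∫ y in ST, q x y * (νT y - ν'T y)‖ := by
          rw [hsub, Real.norm_eq_abs]
      _ ≤ ∫ y in ST, ‖q x y * (νT y - ν'T y)‖ := norm_integral_le_integral_norm _
      _ ≤ ∫ y in ST, Δ * q x y := by
          apply setIntegral_mono_on hsubint.norm (hIint.const_mul Δ) hSTm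
          intro y hy
          rw [Real.norm_eq_abs, abs_mul, abs_sub_comm]
          calc |q x y| * |ν'T y - νT y| ≤ |q x y| * Δ :=
                mul_le_mul_of_nonneg_left (hΔge y hy) (abs_nonneg _)
            _ = Δ * q x y := by rw [abs_of_pos (hqpos x y)]; ring
      _ = Δ * I := by rw [hIdef, integral_const_mul]
  -- main estimate
  have hdecomp : H'⁻¹ • A' - H⁻¹ • A = H'⁻¹ • (A' - A) + (H'⁻¹ - H⁻¹) • A := by
    rw [smul_sub, sub_smul]; abel
  have hνI : 0 < νmin * I := mul_pos hνmin hIpos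
  have t1 : ‖H'⁻¹ • (A' - A)‖ ≤ Δ / νmin * Q := by
    rw [norm_smul, Real.norm_eq_abs, abs_inv, abs_of_pos hH'pos]
    have h1 : H'⁻¹ ≤ (νmin * I)⁻¹ := inv_anti₀ hνI hH'ge
    calc H'⁻¹ * ‖A' - A‖ ≤ (νmin * I)⁻¹ * (Δ * Q * I) :=
          mul_le_mul h1 hAA' (norm_nonneg _) (inv_nonneg.2 hνI.le)
      _ = Δ / νmin * Q := by field_simp
  have habs : |H'⁻¹ - H⁻¹| ≤ Δ / (νmin * H) := by
    rw [inv_sub_inv hH'pos.ne' hHpos.ne', abs_div, abs_of_pos (mul_pos hH'pos hHpos)]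
    rw [div_le_div_iff₀ (mul_pos hH'pos hHpos) (mul_pos hνmin hHpos)]
    have h1 : |H - H'| * (νmin * H) ≤ (Δ * I) * (νmin * H) :=
      mul_le_mul_of_nonneg_right hHH' (mul_pos hνmin hHpos).le
    have h2 : (Δ * H) * (νmin * I) ≤ (Δ * H) * H' :=
      mul_le_mul_of_nonneg_left hH'ge (mul_nonneg hΔ0 hHpos.le)
    nlinarith [h1, h2]
  have t2 : ‖(H'⁻¹ - H⁻¹) • A‖ ≤ Δ / νmin * ‖H⁻¹ • A‖ := by
    rw [norm_smul, Real.norm_eq_abs, hGnormEq]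
    calc |H'⁻¹ - H⁻¹| * ‖A‖ ≤ Δ / (νmin * H) * ‖A‖ :=
          mul_le_mul_of_nonneg_right habs (norm_nonneg _)
      _ = Δ / νmin * (H⁻¹ * ‖A‖) := by field_simp
  have main : ‖H'⁻¹ • A' - H⁻¹ • A‖ ≤ Δ / νmin * (Q + ‖H⁻¹ • A‖) := by
    calc ‖H'⁻¹ • A' - H⁻¹ • A‖
        = ‖H'⁻¹ • (A' - A) + (H'⁻¹ - H⁻¹) • A‖ := by rw [hdecomp]
      _ ≤ ‖H'⁻¹ • (A' - A)‖ + ‖(H'⁻¹ - H⁻¹) • A‖ := norm_add_le _ _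
      _ ≤ Δ / νmin * Q + Δ / νmin * ‖H⁻¹ • A‖ := add_le_add t1 t2
      _ = Δ / νmin * (Q + ‖H⁻¹ • A‖) := by ring
  rw [hlogH, hlogH']
  refine ⟨main, main.trans ?_⟩
  have hstep : Δ / νmin * (Q + ‖H⁻¹ • A‖) ≤ Δ / νmin * (Cb + Cb) :=
    mul_le_mul_of_nonneg_left (add_le_add hQle (hGle.trans hQle))
      (div_nonneg hΔ0 hνmin.le)
  refine hstep.trans (le_of_eq ?_)
  rw [hCbdef]
  field_simp
  ring
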